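/- (Generalized Morrey bound from a local commutator-type estimate) Let n ≥ 1, 1 < p < ∞, and let φ₁, φ₂ be positive measurable functions on ℝⁿ × (0,∞). Assume there is a constant C₀, independent of x and r, such that ∫_r^∞ (1 + ln(t/r)) φ₁(x,t) t^{−n/p−1} dt ≤ C₀ φ₂(x,r) r^{−n/p} for all x ∈ ℝⁿ and r > 0. Suppose f ∈ L_p^{loc}(ℝⁿ) and F is a measurable function on ℝⁿ such that, for some constant A ≥ 0, ‖F‖_{L_p(B(x,r))} ≤ A r^{n/p} ∫_{2r}^∞ (1 + ln(t/r)) t^{−n/p−1} ‖f‖_{L_p(B(x,t))} dt holds for every x ∈ ℝⁿ and r > 0. Then sup_{x ∈ ℝⁿ, r > 0} φ₂(x,r)^{−1} ‖F‖_{L_p(B(x,r))} ≤ A C₀ sup_{x ∈ ℝⁿ, r > 0} φ₁(x,r)^{−1} ‖f‖_{L_p(B(x,r))}; in particular, if f belongs to the generalized Morrey space M_{p,φ₁}, then ‖F‖_{M_{p,φ₂}} ≤ A C₀ ‖f‖_{M_{p,φ₁}}. -/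

import Mathlib

open MeasureTheory Metric Set Filter ENNReal Topology

noncomputable section

/-- The local `L_p` norm `‖f‖_{L_p(B(x,t))}`. -/
def LpB (n : ℕ) (p : ℝ) (f : EuclideanSpace ℝ (Fin n) → ℝ)
    (x : EuclideanSpace ℝ (Fin n)) (t : ℝ) : ℝ :=
  (∫ y in ball x t, |f y| ^ p ∂volume) ^ (1 / p)

/-- The generalized Morrey norm `‖g‖_{M_{p,φ}} = sup_{x, r>0} φ(x,r)⁻¹ ‖g‖_{L_p(B(x,r))}`
(as an extended real number). -/
def morreyNorm (n : ℕ) (p : ℝ) (φ : EuclideanSpace ℝ (Fin n) → ℝ → ℝ)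
    (g : EuclideanSpace ℝ (Fin n) → ℝ) : ℝ≥0∞ :=
  ⨆ (x : EuclideanSpace ℝ (Fin n)) (r : ℝ) (_ : 0 < r),
    ENNReal.ofReal ((φ x r)⁻¹ * LpB n p g x r)

private lemma measurable_rpow_const' (c : ℝ) : Measurable fun t : ℝ => t ^ c := by
  measurability

theorem morrey_bound_from_local_estimate (n : ℕ) (hn : 1 ≤ n) (p : ℝ) (hp : 1 < p)
    (φ₁ φ₂ : EuclideanSpace ℝ (Fin n) → ℝ → ℝ)
    (hφ₁meas : Measurable (Function.uncurry φ₁)) (hφ₂meas : Measurable (Function.uncurry φ₂))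
    (hφ₁pos : ∀ x r, 0 < r → 0 < φ₁ x r) (hφ₂pos : ∀ x r, 0 < r → 0 < φ₂ x r)
    (C₀ : ℝ)
    (hC₀ : ∀ (x : EuclideanSpace ℝ (Fin n)) (r : ℝ), 0 < r →
      (∫⁻ t in Ioi r, ENNReal.ofReal ((1 + Real.log (t / r)) * φ₁ x t *
        t ^ (-(n : ℝ) / p - 1))) ≤ ENNReal.ofReal (C₀ * φ₂ x r * r ^ (-(n : ℝ) / p)))
    (f : EuclideanSpace ℝ (Fin n) → ℝ)
    (hf : ∀ (x : EuclideanSpace ℝ (Fin n)) (t : ℝ), 0 < t →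
      MemLp f (ENNReal.ofReal p) (volume.restrict (ball x t)))
    (F : EuclideanSpace ℝ (Fin n) → ℝ) (hFmeas : Measurable F)
    (A : ℝ) (hA : 0 ≤ A)
    (hF : ∀ (x : EuclideanSpace ℝ (Fin n)) (r : ℝ), 0 < r →
      ENNReal.ofReal (LpB n p F x r) ≤
        ENNReal.ofReal (A * r ^ ((n : ℝ) / p)) *
          ∫⁻ t in Ioi (2 * r), ENNReal.ofReal ((1 + Real.log (t / r)) *
            t ^ (-(n : ℝ) / p - 1) * LpB n p f x t)) :
    morreyNorm n p φ₂ F ≤ ENNReal.ofReal (A * C₀) * morreyNorm n p φ₁ f := by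
  set M := morreyNorm n p φ₁ f with hM
  have key : ∀ x t, 0 < t →
      ENNReal.ofReal (LpB n p f x t) ≤ ENNReal.ofReal (φ₁ x t) * M := by
    intro x t ht
    have h1 : ENNReal.ofReal ((φ₁ x t)⁻¹ * LpB n p f x t) ≤ M := by
      rw [hM, morreyNorm]
      exact le_iSup_of_le x (le_iSup_of_le t (le_iSup_of_le ht le_rfl))
    calc ENNReal.ofReal (LpB n p f x t)
        = ENNReal.ofReal (φ₁ x t * ((φ₁ x t)⁻¹ * LpB n p f x t)) := by
          rw [← mul_assoc, mul_inv_cancel₀ (hφ₁pos x t ht).ne', one_mul]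
      _ = ENNReal.ofReal (φ₁ x t) * ENNReal.ofReal ((φ₁ x t)⁻¹ * LpB n p f x t) :=
          ENNReal.ofReal_mul (hφ₁pos x t ht).le
      _ ≤ _ := mul_le_mul_right h1 _
  rw [morreyNorm]
  refine iSup_le fun x => iSup_le fun r => iSup_le fun hr => ?_
  have hmeasg : Measurable (fun t : ℝ => ENNReal.ofReal ((1 + Real.log (t / r)) * φ₁ x t *
      t ^ (-(n : ℝ) / p - 1))) := by
    have hφx : Measurable (fun t : ℝ => φ₁ x t) :=
      hφ₁meas.comp (measurable_prodMk_left)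
    exact (((measurable_const.add ((Real.measurable_log).comp
      (measurable_id.div_const r))).mul hφx).mul
      (measurable_rpow_const' _)).ennreal_ofReal
  have hint : (∫⁻ t in Ioi (2 * r), ENNReal.ofReal ((1 + Real.log (t / r)) *
        t ^ (-(n : ℝ) / p - 1) * LpB n p f x t)) ≤
      ENNReal.ofReal (C₀ * φ₂ x r * r ^ (-(n : ℝ) / p)) * M := by
    calc (∫⁻ t in Ioi (2 * r), ENNReal.ofReal ((1 + Real.log (t / r)) *
          t ^ (-(n : ℝ) / p - 1) * LpB n p f x t))
        ≤ ∫⁻ t in Ioi (2 * r), ENNReal.ofReal ((1 + Real.log (t / r)) * φ₁ x t *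
            t ^ (-(n : ℝ) / p - 1)) * M := by
          apply setLIntegral_mono' measurableSet_Ioi
          intro t ht
          have ht2r : 2 * r < t := ht
          have ht0 : 0 < t := lt_trans (by linarith) ht2r
          have hlog : 0 ≤ Real.log (t / r) := Real.log_nonneg (by
            rw [le_div_iff₀ hr]; linarith)
          have ha : 0 ≤ (1 + Real.log (t / r)) * t ^ (-(n : ℝ) / p - 1) :=
            mul_nonneg (by linarith) (Real.rpow_nonneg ht0.le _)
          calc ENNReal.ofReal ((1 + Real.log (t / r)) * t ^ (-(n : ℝ) / p - 1) * LpB n p f x t)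
              = ENNReal.ofReal ((1 + Real.log (t / r)) * t ^ (-(n : ℝ) / p - 1)) *
                  ENNReal.ofReal (LpB n p f x t) := ENNReal.ofReal_mul ha
            _ ≤ ENNReal.ofReal ((1 + Real.log (t / r)) * t ^ (-(n : ℝ) / p - 1)) *
                  (ENNReal.ofReal (φ₁ x t) * M) := mul_le_mul_right (key x t ht0) _
            _ = ENNReal.ofReal ((1 + Real.log (t / r)) * φ₁ x t *
                  t ^ (-(n : ℝ) / p - 1)) * M := by
                rw [← mul_assoc, ← ENNReal.ofReal_mul ha]
                congr 1
                apply congrArg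
                ring
      _ = (∫⁻ t in Ioi (2 * r), ENNReal.ofReal ((1 + Real.log (t / r)) * φ₁ x t *
            t ^ (-(n : ℝ) / p - 1))) * M :=
          lintegral_mul_const _ hmeasg
      _ ≤ (∫⁻ t in Ioi r, ENNReal.ofReal ((1 + Real.log (t / r)) * φ₁ x t *
            t ^ (-(n : ℝ) / p - 1))) * M :=
          mul_le_mul_left (lintegral_mono_set (Ioi_subset_Ioi (by linarith))) _
      _ ≤ ENNReal.ofReal (C₀ * φ₂ x r * r ^ (-(n : ℝ) / p)) * M :=
          mul_le_mul_left (hC₀ x r hr) _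
  have hφ2inv : (0:ℝ) ≤ (φ₂ x r)⁻¹ := (inv_nonneg).2 (hφ₂pos x r hr).le
  have hArp : (0:ℝ) ≤ A * r ^ ((n : ℝ) / p) :=
    mul_nonneg hA (Real.rpow_nonneg hr.le _)
  have hrr : r ^ ((n : ℝ) / p) * r ^ (-(n : ℝ) / p) = 1 := by
    rw [← Real.rpow_add hr, neg_div, add_neg_cancel, Real.rpow_zero]
  have hφφ : (φ₂ x r)⁻¹ * φ₂ x r = 1 := inv_mul_cancel₀ (hφ₂pos x r hr).ne'
  calc ENNReal.ofReal ((φ₂ x r)⁻¹ * LpB n p F x r)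
      = ENNReal.ofReal ((φ₂ x r)⁻¹) * ENNReal.ofReal (LpB n p F x r) :=
        ENNReal.ofReal_mul hφ2inv
    _ ≤ ENNReal.ofReal ((φ₂ x r)⁻¹) * (ENNReal.ofReal (A * r ^ ((n : ℝ) / p)) *
          (ENNReal.ofReal (C₀ * φ₂ x r * r ^ (-(n : ℝ) / p)) * M)) :=
        mul_le_mul_right ((hF x r hr).trans (mul_le_mul_right hint _)) _
    _ = ENNReal.ofReal ((φ₂ x r)⁻¹ * (A * r ^ ((n : ℝ) / p)) *
          (C₀ * φ₂ x r * r ^ (-(n : ℝ) / p))) * M := by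
        rw [ENNReal.ofReal_mul (mul_nonneg hφ2inv hArp),
          ENNReal.ofReal_mul hφ2inv]
        ring
    _ = ENNReal.ofReal (A * C₀) * M := by
        congr 1
        apply congrArg
        calc (φ₂ x r)⁻¹ * (A * r ^ ((n : ℝ) / p)) * (C₀ * φ₂ x r * r ^ (-(n : ℝ) / p))
            = (A * C₀) * ((φ₂ x r)⁻¹ * φ₂ x r) *
                (r ^ ((n : ℝ) / p) * r ^ (-(n : ℝ) / p)) := by ring
          _ = A * C₀ := by rw [hrr, hφφ]; ring
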